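/- Let μ > 1, Λ ∈ ℝ with Λ < 1/2, and suppose {C_n} is a nonzero solution of d_{n+1}C_{n+1} + 2μ y_n(Λ)C_n + d_n C_{n−1} = 0 (d_0 = 0) with {C_n} ∈ ℓ²(ℕ₀), where d_n = n^{1/2}(n²−1/4)^{1/4} and y_n(Λ) = (n+1/2)^{1/2}√(n+1/2−Λ) > 0. Then ∑_n y_n(Λ)|C_n|² < ∞ and the quadratic form identity ∑_{n=0}^N 2μ y_n(Λ)|C_n|² + 2 Re ∑_{n=1}^N d_n C_n conj(C_{n−1}) = −d_{N+1} Re(C_{N+1} conj(C_N)) holds for all N (where the right side tends to 0 if d_{N+1}C_{N+1}conj(C_N) → 0). -/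

import Mathlib

/-- Off-diagonal Jacobi entries `d_n = n^{1/2}(n²−1/4)^{1/4}` (so `d_0 = 0`). -/
noncomputable def dEnt (n : ℕ) : ℝ :=
  Real.sqrt n * ((n : ℝ) ^ 2 - 1 / 4) ^ ((1 : ℝ) / 4)

/-- For real `Λ < 1/2`, `y_n(Λ) = (n+1/2)^{1/2} √(n+1/2−Λ) > 0`. -/
noncomputable def yR (n : ℕ) (Λ : ℝ) : ℝ :=
  Real.sqrt ((n : ℝ) + 1 / 2) * Real.sqrt ((n : ℝ) + 1 / 2 - Λ)

lemma dEnt_zero : dEnt 0 = 0 := by simp [dEnt]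

lemma sq_base_nonneg (m : ℕ) : (0:ℝ) ≤ ((m+1:ℕ):ℝ)^2 - 1/4 := by
  push_cast; nlinarith [Nat.cast_nonneg (α := ℝ) m]

lemma dEnt_nonneg (n : ℕ) : 0 ≤ dEnt n := by
  cases n with
  | zero => simp [dEnt]
  | succ m =>
    exact mul_nonneg (Real.sqrt_nonneg _) (Real.rpow_nonneg (sq_base_nonneg m) _)

lemma dEnt_le (n : ℕ) : dEnt n ≤ n := by
  cases n with
  | zero => simp [dEnt]
  | succ m =>
    have h1 : ((m+1:ℕ):ℝ)^2 - 1/4 ≤ ((m+1:ℕ):ℝ)^2 := by nlinarith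
    have h2 : (((m+1:ℕ):ℝ)^2 - 1/4) ^ ((1:ℝ)/4) ≤ (((m+1:ℕ):ℝ)^2) ^ ((1:ℝ)/4) :=
      Real.rpow_le_rpow (sq_base_nonneg m) h1 (by norm_num)
    have h3 : (((m+1:ℕ):ℝ)^2) ^ ((1:ℝ)/4) = Real.sqrt ((m+1:ℕ):ℝ) := by
      rw [← Real.rpow_natCast (((m+1:ℕ):ℝ)) 2, ← Real.rpow_mul (Nat.cast_nonneg _)]
      norm_num
      exact (Real.sqrt_eq_rpow _).symm
    have h4 : dEnt (m+1) ≤ Real.sqrt ((m+1:ℕ):ℝ) * Real.sqrt ((m+1:ℕ):ℝ) := by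
      unfold dEnt
      push_cast
      push_cast at h2 h3
      nlinarith [Real.sqrt_nonneg ((m:ℝ)+1)]
    rw [Real.mul_self_sqrt (Nat.cast_nonneg _)] at h4
    exact h4

lemma yR_nonneg (n : ℕ) (Λ : ℝ) : 0 ≤ yR n Λ :=
  mul_nonneg (Real.sqrt_nonneg _) (Real.sqrt_nonneg _)

lemma yR_lb (n : ℕ) {Λ : ℝ} (hΛ : Λ < 1/2) : (n:ℝ) ≤ yR n Λ := by
  have h1 : Real.sqrt (n:ℝ) ≤ Real.sqrt ((n:ℝ) + 1/2) := Real.sqrt_le_sqrt (by linarith)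
  have h2 : Real.sqrt (n:ℝ) ≤ Real.sqrt ((n:ℝ) + 1/2 - Λ) := Real.sqrt_le_sqrt (by linarith)
  calc (n:ℝ) = Real.sqrt n * Real.sqrt n := by
        rw [Real.mul_self_sqrt (Nat.cast_nonneg _)]
    _ ≤ yR n Λ := mul_le_mul h1 h2 (Real.sqrt_nonneg _) (Real.sqrt_nonneg _)

lemma yR_ub (n : ℕ) (Λ : ℝ) : yR n Λ ≤ (n:ℝ) + 1 + |Λ| := by
  have hc : (0:ℝ) ≤ (n:ℝ) + 1 + |Λ| := by positivity
  have h1 : Real.sqrt ((n:ℝ) + 1/2) ≤ Real.sqrt ((n:ℝ) + 1 + |Λ|) :=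
    Real.sqrt_le_sqrt (by have := abs_nonneg Λ; linarith)
  have h2 : Real.sqrt ((n:ℝ) + 1/2 - Λ) ≤ Real.sqrt ((n:ℝ) + 1 + |Λ|) :=
    Real.sqrt_le_sqrt (by have := neg_abs_le Λ; linarith)
  calc yR n Λ ≤ Real.sqrt ((n:ℝ)+1+|Λ|) * Real.sqrt ((n:ℝ)+1+|Λ|) :=
        mul_le_mul h1 h2 (Real.sqrt_nonneg _) (Real.sqrt_nonneg _)
    _ = (n:ℝ)+1+|Λ| := Real.mul_self_sqrt hc

lemma re_symm (z w : ℂ) : (z * (starRingEnd ℂ) w).re = (w * (starRingEnd ℂ) z).re := by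
  simp [Complex.mul_re]; ring

/-- Along a subsequence, `(m+1+c) * E m ≤ 1`. -/
lemma freq_small (E : ℕ → ℝ) (c : ℝ) (hc : 0 ≤ c)
    (hsum : Summable E) :
    ∀ N₀ : ℕ, ∃ m : ℕ, N₀ ≤ m ∧ ((m:ℝ) + 1 + c) * E m ≤ 1 := by
  intro N₀
  by_contra hcon
  push_neg at hcon
  have hpos : ∀ k : ℕ, (0:ℝ) < (k:ℝ) + 1 + c := by intro k; positivity
  have hlow : ∀ k : ℕ, 1/(((k+N₀:ℕ):ℝ) + 1 + c) ≤ E (k + N₀) := by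
    intro k
    have h := hcon (k + N₀) (Nat.le_add_left _ _)
    have hp := hpos (k + N₀)
    rw [div_le_iff₀ hp]
    nlinarith [h.le]
  have hs1 : Summable (fun k => E (k + N₀)) := (summable_nat_add_iff N₀).2 hsum
  have hs2 : Summable (fun k : ℕ => 1/(((k+N₀:ℕ):ℝ) + 1 + c)) :=
    Summable.of_nonneg_of_le (fun k => by positivity) hlow hs1
  have hs3 : Summable (fun k : ℕ => (1/((N₀:ℝ)+2+c)) * (1/((k:ℝ)+1))) := by
    apply Summable.of_nonneg_of_le (fun k => by positivity) _ hs2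
    intro k
    rw [div_mul_div_comm, one_mul]
    apply div_le_div_of_nonneg_left (by norm_num) (hpos (k+N₀)) ?_
    · push_cast
      have : (0:ℝ) ≤ (k:ℝ) := Nat.cast_nonneg k
      have : (0:ℝ) ≤ (N₀:ℝ) := Nat.cast_nonneg N₀
      nlinarith
  have hs4 : Summable (fun k : ℕ => 1/((k:ℝ)+1)) := by
    rw [← summable_mul_left_iff (a := 1/((N₀:ℝ)+2+c)) (by positivity)]
    exact hs3
  have hs5 : Summable (fun k : ℕ => 1/(k:ℝ)) := by
    rw [← summable_nat_add_iff 1]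
    convert hs4 using 2 with k
    case e'_3 => rfl
    push_cast
    ring
  exact Real.not_summable_one_div_natCast hs5

/-- Reindexing bound for the cross terms. -/
lemma reindex_bound (E : ℕ → ℝ) (hE : ∀ n, 0 ≤ E n) :
    ∀ M : ℕ, (∑ n ∈ Finset.Icc 1 M, (n:ℝ)*(E n + E (n-1))) + ((M:ℝ)+1)*E M
      ≤ ∑ n ∈ Finset.range (M+1), (2*(n:ℝ)+1)*E n := by
  intro M
  induction M with
  | zero =>
    rw [Finset.Icc_eq_empty (by norm_num), Finset.sum_empty, Finset.sum_range_one]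
    norm_num
  | succ M ih =>
    rw [Finset.sum_Icc_succ_top (Nat.le_add_left 1 M), Finset.sum_range_succ]
    simp only [Nat.add_sub_cancel]
    push_cast
    push_cast at ih
    linarith [hE (M+1)]

/-- For `μ > 1`, real `Λ < 1/2` and a nonzero `ℓ²` solution `{C_n}` of
`d_{n+1}C_{n+1} + 2μ y_n(Λ)C_n + d_n C_{n−1} = 0`, one has
`∑ y_n(Λ)|C_n|² < ∞`, and the quadratic form identity
`∑_{n=0}^N 2μ y_n(Λ)|C_n|² + 2 Re ∑_{n=1}^N d_n C_n conj(C_{n−1})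
  = −d_{N+1} Re(C_{N+1} conj(C_N))` holds for all `N`. -/
theorem real_energy_identity (μ Λ : ℝ) (hμ : 1 < μ) (hΛ : Λ < 1 / 2)
    (C : ℕ → ℂ) (hl2 : Summable fun n => ‖C n‖ ^ 2) (hC : ∃ n, C n ≠ 0)
    (hrec : ∀ n : ℕ,
      (dEnt (n + 1) : ℂ) * C (n + 1) + 2 * (μ : ℂ) * (yR n Λ : ℂ) * C n
        + (dEnt n : ℂ) * C (n - 1) = 0) :
    Summable (fun n => yR n Λ * ‖C n‖ ^ 2) ∧
    ∀ N : ℕ,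
      (∑ n ∈ Finset.range (N + 1), 2 * μ * yR n Λ * ‖C n‖ ^ 2)
        + 2 * (∑ n ∈ Finset.Icc 1 N, (dEnt n : ℂ) * C n * (starRingEnd ℂ) (C (n - 1))).re
      = -(dEnt (N + 1)) * (C (N + 1) * (starRingEnd ℂ) (C N)).re := by
  -- real part of the recurrence against conj (C n)
  have hstep : ∀ n : ℕ,
      dEnt (n+1) * (C (n+1) * (starRingEnd ℂ) (C n)).re + 2*μ*yR n Λ*‖C n‖^2
        + dEnt n * (C n * (starRingEnd ℂ) (C (n-1))).re = 0 := by
    intro n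
    have h := congrArg (fun z => (z * (starRingEnd ℂ) (C n)).re) (hrec n)
    simp only [add_mul, zero_mul, Complex.zero_re, Complex.add_re, mul_assoc] at h
    rw [show (2 : ℂ) * ((μ:ℂ) * ((yR n Λ : ℂ) * (C n * (starRingEnd ℂ) (C n)))) =
        ((2*μ*yR n Λ : ℝ):ℂ) * (C n * (starRingEnd ℂ) (C n)) by push_cast; ring] at h
    rw [Complex.mul_conj] at h
    simp only [Complex.re_ofReal_mul, Complex.ofReal_re] at h
    rw [re_symm (C n) (C (n-1))]
    rw [Complex.normSq_eq_norm_sq] at h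
    exact h
  -- the quadratic form identity
  have hid : ∀ N : ℕ,
      (∑ n ∈ Finset.range (N + 1), 2 * μ * yR n Λ * ‖C n‖ ^ 2)
        + 2 * (∑ n ∈ Finset.Icc 1 N, (dEnt n : ℂ) * C n * (starRingEnd ℂ) (C (n - 1))).re
      = -(dEnt (N + 1)) * (C (N + 1) * (starRingEnd ℂ) (C N)).re := by
    intro N
    induction N with
    | zero =>
      rw [Finset.Icc_eq_empty (by norm_num), Finset.sum_empty, Finset.sum_range_one]
      have h := hstep 0
      rw [dEnt_zero] at h
      simp only [Complex.zero_re]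
      linarith
    | succ N ih =>
      rw [Finset.sum_range_succ, Finset.sum_Icc_succ_top (Nat.le_add_left 1 N),
        Complex.add_re]
      have hre : ((dEnt (N+1) : ℂ) * C (N+1) * (starRingEnd ℂ) (C (N+1-1))).re
          = dEnt (N+1) * (C (N+1) * (starRingEnd ℂ) (C N)).re := by
        rw [mul_assoc, Complex.re_ofReal_mul]
        norm_num
      rw [hre]
      have h := hstep (N+1)
      simp only [Nat.add_sub_cancel] at h
      linarith
  refine ⟨?_, hid⟩
  -- Summability part
  set E : ℕ → ℝ := fun n => ‖C n‖^2 with hEdef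
  have hE : ∀ n, 0 ≤ E n := fun n => by positivity
  set S : ℝ := ∑' n, E n with hSdef
  have hS0 : 0 ≤ S := tsum_nonneg hE
  set T : ℕ → ℝ := fun N => ∑ n ∈ Finset.range (N+1), yR n Λ * E n with hTdef
  have hTnn : ∀ N, 0 ≤ T N :=
    fun N => Finset.sum_nonneg fun n _ => mul_nonneg (yR_nonneg n Λ) (hE n)
  -- key a-priori bound
  have hA : ∀ N, 2*(μ-1) * T N ≤ 2*((N:ℝ)+2+|Λ|) * E (N+1) + S := by
    intro N
    set r : ℕ → ℝ := fun n => (C n * (starRingEnd ℂ) (C (n-1))).re with hrdef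
    have hrabs : ∀ n, |r n| ≤ ‖C n‖ * ‖C (n-1)‖ := by
      intro n
      calc |r n| ≤ ‖C n * (starRingEnd ℂ) (C (n-1))‖ := Complex.abs_re_le_norm _
        _ = ‖C n‖ * ‖C (n-1)‖ := by rw [norm_mul, RCLike.norm_conj]
    -- identity in real form
    have h1 : (∑ n ∈ Finset.range (N+1), 2*μ*yR n Λ*E n)
        = -2 * (∑ n ∈ Finset.Icc 1 N, dEnt n * r n) - dEnt (N+1) * r (N+1) := by
      have h := hid N
      have h2 : (∑ n ∈ Finset.Icc 1 N, (dEnt n : ℂ) * C n * (starRingEnd ℂ) (C (n - 1))).re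
          = ∑ n ∈ Finset.Icc 1 N, dEnt n * r n := by
        rw [Complex.re_sum]
        refine Finset.sum_congr rfl fun n _ => ?_
        rw [mul_assoc, Complex.re_ofReal_mul]
      have h3 : r (N+1) = (C (N + 1) * (starRingEnd ℂ) (C N)).re := by
        simp [hrdef]
      rw [h2] at h
      rw [h3]
      linarith
    -- bound each cross term
    have h4 : ∀ n ∈ Finset.Icc 1 N, -(2 * (dEnt n * r n)) ≤ (n:ℝ)*(E n + E (n-1)) := by
      intro n _
      have hd0 := dEnt_nonneg n
      have hdn := dEnt_le n
      have habs := hrabs n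
      have hsq : 2 * (‖C n‖ * ‖C (n-1)‖) ≤ E n + E (n-1) := by
        simp only [hEdef]
        nlinarith [sq_nonneg (‖C n‖ - ‖C (n-1)‖)]
      have : -(r n) ≤ ‖C n‖ * ‖C (n-1)‖ := by
        have := neg_abs_le (r n); linarith
      nlinarith [norm_nonneg (C n), norm_nonneg (C (n-1)), hE n, hE (n-1)]
    have h5 : - dEnt (N+1) * r (N+1) ≤ ((N:ℝ)+1)*(E (N+1) + E N) := by
      have hd0 := dEnt_nonneg (N+1)
      have hdn := dEnt_le (N+1)
      have habs := hrabs (N+1)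
      simp only [Nat.add_sub_cancel] at habs
      have hsq : 2 * (‖C (N+1)‖ * ‖C N‖) ≤ E (N+1) + E N := by
        simp only [hEdef]
        nlinarith [sq_nonneg (‖C (N+1)‖ - ‖C N‖)]
      have hnr : -(r (N+1)) ≤ ‖C (N+1)‖ * ‖C N‖ := by
        have := neg_abs_le (r (N+1)); linarith
      push_cast at hdn ⊢
      nlinarith [norm_nonneg (C (N+1)), norm_nonneg (C N), hE N, hE (N+1)]
    -- total bound by the Icc sum up to N+1
    have h6 : (∑ n ∈ Finset.range (N+1), 2*μ*yR n Λ*E n)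
        ≤ ∑ n ∈ Finset.Icc 1 (N+1), (n:ℝ)*(E n + E (n-1)) := by
      rw [h1, Finset.sum_Icc_succ_top (Nat.le_add_left 1 N)]
      simp only [Nat.add_sub_cancel]
      have hsum4 : ∑ n ∈ Finset.Icc 1 N, (-(2 * (dEnt n * r n)))
          ≤ ∑ n ∈ Finset.Icc 1 N, (n:ℝ)*(E n + E (n-1)) := Finset.sum_le_sum h4
      have e : -2 * ∑ n ∈ Finset.Icc 1 N, dEnt n * r n
          = ∑ n ∈ Finset.Icc 1 N, (-(2 * (dEnt n * r n))) := by
        rw [Finset.mul_sum]; exact Finset.sum_congr rfl fun n _ => by ring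
      push_cast
      linarith [hsum4, h5, e]
    have h7 := reindex_bound E hE (N+1)
    have h8 : ∑ n ∈ Finset.range (N+2), (2*(n:ℝ)+1)*E n
        ≤ 2 * T (N+1) + S := by
      have hterm : ∀ n ∈ Finset.range (N+2), (2*(n:ℝ)+1)*E n ≤ 2 * (yR n Λ * E n) + E n := by
        intro n _
        have := yR_lb n hΛ
        nlinarith [hE n]
      calc ∑ n ∈ Finset.range (N+2), (2*(n:ℝ)+1)*E n
          ≤ ∑ n ∈ Finset.range (N+2), (2 * (yR n Λ * E n) + E n) := Finset.sum_le_sum hterm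
        _ = 2 * T (N+1) + ∑ n ∈ Finset.range (N+2), E n := by
            rw [Finset.sum_add_distrib, ← Finset.mul_sum]
        _ ≤ 2 * T (N+1) + S := by
            have := Summable.sum_le_tsum (Finset.range (N+2)) (fun n _ => hE n) hl2
            linarith
    have h9 : T (N+1) = T N + yR (N+1) Λ * E (N+1) := by
      simp only [hTdef, Finset.sum_range_succ]
    have h10 : yR (N+1) Λ ≤ (N:ℝ) + 2 + |Λ| := by
      have := yR_ub (N+1) Λ
      push_cast at this ⊢
      linarith
    have h11 : 2*μ * T N = ∑ n ∈ Finset.range (N+1), 2*μ*yR n Λ*E n := by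
      rw [hTdef, Finset.mul_sum]
      refine Finset.sum_congr rfl fun n _ => by ring
    have h10' : yR (N+1) Λ * E (N+1) ≤ ((N:ℝ)+2+|Λ|) * E (N+1) :=
      mul_le_mul_of_nonneg_right h10 (hE _)
    have hdrop : (0:ℝ) ≤ (((N+1:ℕ):ℝ)+1) * E (N+1) := by positivity
    push_cast at h7 hdrop
    linarith [h6, h7, h8, h9, h10', hdrop]
  -- boundedness of partial sums
  have hbound : ∀ N, T N ≤ (2 + S) / (2*(μ-1)) := by
    intro N
    obtain ⟨m, hm, hsmall⟩ := freq_small E |Λ| (abs_nonneg Λ) hl2 (N+1)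
    have hm1 : 1 ≤ m := le_trans (Nat.le_add_left 1 N) hm
    set N' := m - 1 with hN'
    have hmN' : m = N' + 1 := (Nat.succ_pred_eq_of_pos hm1).symm
    have hNN' : N ≤ N' := by omega
    have hmono : T N ≤ T N' := by
      apply Finset.sum_le_sum_of_subset_of_nonneg
      · exact Finset.range_subset_range.2 (by omega)
      · intro n _ _; exact mul_nonneg (yR_nonneg n Λ) (hE n)
    have hAN := hA N'
    rw [hmN'] at hsmall
    push_cast at hsmall hAN
    have hmuppos : (0:ℝ) < 2*(μ-1) := by linarith
    rw [le_div_iff₀ hmuppos]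
    have hmono2 := mul_le_mul_of_nonneg_left hmono hmuppos.le
    nlinarith [hAN, hsmall, hmono2]
  -- conclude summability
  apply summable_of_sum_range_le (c := (2 + S) / (2*(μ-1)))
    (fun n => mul_nonneg (yR_nonneg n Λ) (hE n))
  intro n
  cases n with
  | zero =>
    simp only [Finset.range_zero, Finset.sum_empty]
    apply div_nonneg (by linarith) (by linarith)
  | succ k => exact hbound k
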